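/- For a prefix-free language K and languages M over Σ, one has K·(Σ* \ M) = (Σ* \ K·M) ∩ K·Σ*. -/
import Mathlib

/-- For prefix-free `K`: `K·(Σ* \ M) = (Σ* \ K·M) ∩ K·Σ*`. -/
theorem prefixFree_concat_compl {α : Type*} (K M : Set (List α))
    (hK : ∀ x ∈ K, ∀ y ∈ K, x <+: y → x = y) :
    {z : List α | ∃ x ∈ K, ∃ y ∉ M, z = x ++ y} =
      {z : List α | ∃ x ∈ K, ∃ y ∈ M, z = x ++ y}ᶜ ∩
      {z : List α | ∃ x ∈ K, ∃ y : List α, z = x ++ y} := by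
  ext z
  simp only [Set.mem_setOf_eq, Set.mem_inter_iff, Set.mem_compl_iff]
  constructor
  · rintro ⟨x, hx, y, hy, rfl⟩
    refine ⟨?_, x, hx, y, rfl⟩
    rintro ⟨x', hx', y', hy', heq⟩
    have hp : x = x' := by
      rcases List.prefix_or_prefix_of_prefix (⟨y, rfl⟩ : x <+: x ++ y)
        (heq ▸ ⟨y', rfl⟩ : x' <+: x ++ y) with h | h
      · exact hK x hx x' hx' h
      · exact (hK x' hx' x hx h).symm
    subst hp
    exact hy (List.append_cancel_left heq ▸ hy')
  · rintro ⟨hnm, x, hx, y, rfl⟩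
    exact ⟨x, hx, y, fun hy => hnm ⟨x, hx, y, hy, rfl⟩, rfl⟩
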